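/- Let $k \ge 2$ and $l \ge 2$ be integers and let $G_l = K_{l-1} \vee (l K_k)$. Then $I'(G_l) = k + \frac{k-1}{l-1}$. -/

import Mathlib

open SimpleGraph

noncomputable def isoCount {V : Type*} (G : SimpleGraph V) (S : Set V) : ℕ :=
  {v | v ∉ S ∧ ∀ w, G.Adj v w → w ∈ S}.ncard

noncomputable def isoTough {V : Type*} [Fintype V] (G : SimpleGraph V) : ℝ :=
  sInf {x : ℝ | ∃ S : Set V, 2 ≤ isoCount G S ∧ x = (S.ncard : ℝ) / (isoCount G S : ℝ)}

noncomputable def isoToughVar {V : Type*} [Fintype V] (G : SimpleGraph V) : ℝ :=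
  sInf {x : ℝ | ∃ S : Set V, 2 ≤ isoCount G S ∧ x = (S.ncard : ℝ) / ((isoCount G S : ℝ) - 1)}

/-- The join `K_c ∨ (d K_1)`. -/
def joinKE (c d : ℕ) : SimpleGraph (Fin c ⊕ Fin d) where
  Adj x y := x ≠ y ∧ (x.isLeft ∨ y.isLeft)
  symm := by constructor; intro x y h; tauto
  loopless := by constructor; intro x h; exact h.1 rfl

/-- The star `K_{1,n-1}`: join of one center with `n-1` leaves. -/
def starGraph (n : ℕ) : SimpleGraph (Fin 1 ⊕ Fin (n-1)) := joinKE 1 (n-1)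

/-- The graph `G_l = K_{l-1} ∨ (l K_k)`. -/
def Gl (k l : ℕ) : SimpleGraph (Fin (l-1) ⊕ Fin l × Fin k) where
  Adj x y := x ≠ y ∧ (x.isLeft ∨ y.isLeft ∨
    ∃ i p q, x = Sum.inr (i, p) ∧ y = Sum.inr (i, q))
  symm := by
    constructor
    rintro x y ⟨h1, h2⟩
    refine ⟨h1.symm, ?_⟩
    rcases h2 with h | h | ⟨i, p, q, hx, hy⟩
    · tauto
    · tauto
    · exact Or.inr (Or.inr ⟨i, q, p, hy, hx⟩)
  loopless := ⟨fun x h => h.1 rfl⟩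

noncomputable instance GlDec (k l : ℕ) : DecidableRel (Gl k l).Adj := Classical.decRel _

lemma Gl_adj (k l : ℕ) (x y : Fin (l-1) ⊕ Fin l × Fin k) :
    (Gl k l).Adj x y ↔ x ≠ y ∧ (x.isLeft ∨ y.isLeft ∨
      ∃ i p q, x = Sum.inr (i, p) ∧ y = Sum.inr (i, q)) := Iff.rfl


lemma ncard_set_prod {α β : Type*} (A : Set α) (B : Set β) :
    (A ×ˢ B).ncard = A.ncard * B.ncard := by
  rw [← Nat.card_coe_set_eq, ← Nat.card_coe_set_eq, ← Nat.card_coe_set_eq,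
    Nat.card_congr (Equiv.Set.prod A B), Nat.card_prod]


lemma Gl_lower (k l : ℕ) (hk : 2 ≤ k) (hl : 2 ≤ l)
    (S : Set (Fin (l-1) ⊕ Fin l × Fin k))
    (h2 : 2 ≤ isoCount (Gl k l) S) :
    isoCount (Gl k l) S ≤ l ∧
      (l - 1) + (isoCount (Gl k l) S) * (k - 1) ≤ S.ncard := by
  classical
  set I : Set (Fin (l-1) ⊕ Fin l × Fin k) :=
    {v | v ∉ S ∧ ∀ w, (Gl k l).Adj v w → w ∈ S} with hIdef
  have hI2 : 2 ≤ I.ncard := h2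
  have hinr : ∀ v ∈ I, ∃ i p, v = Sum.inr (i, p) := by
    rintro v hv
    match v with
    | Sum.inr (i, p) => exact ⟨i, p, rfl⟩
    | Sum.inl a =>
      obtain ⟨w, hw, hwv⟩ := Set.exists_ne_of_one_lt_ncard (s := I) (by omega) (Sum.inl a)
      exact absurd (hv.2 w ((Gl_adj _ _ _ _).2 ⟨Ne.symm hwv, Or.inl (by simp)⟩)) hw.1
  obtain ⟨v0, hv0⟩ : I.Nonempty := Set.nonempty_of_ncard_ne_zero (by omega)
  obtain ⟨i0, p0, rfl⟩ := hinr v0 hv0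
  have hleft : ∀ a : Fin (l-1), Sum.inl a ∈ S := fun a =>
    hv0.2 _ ((Gl_adj _ _ _ _).2 ⟨by simp, Or.inr (Or.inl (by simp))⟩)
  set g : Fin (l-1) ⊕ Fin l × Fin k → Fin l :=
    Sum.elim (fun _ => i0) Prod.fst with hgdef
  have hg : Set.InjOn g I := by
    intro v hv w hw hvw
    obtain ⟨i, p, rfl⟩ := hinr v hv
    obtain ⟨j, q, rfl⟩ := hinr w hw
    simp only [hgdef, Sum.elim_inr] at hvw
    subst hvw
    by_contra hne
    have hpq : p ≠ q := by rintro rfl; exact hne rfl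
    exact hw.1 (hv.2 _ ((Gl_adj _ _ _ _).2 ⟨by simp [hpq], Or.inr (Or.inr ⟨i, p, q, rfl, rfl⟩)⟩))
  set A : Set (Fin l) := g '' I with hAdef
  have hA : A.ncard = I.ncard := Set.ncard_image_of_injOn hg
  have hnl : I.ncard ≤ l := by
    have := Set.ncard_le_ncard (Set.subset_univ A) (Set.toFinite _)
    rw [hA, Set.ncard_univ] at this
    simpa using this
  set T : Set (Fin (l-1) ⊕ Fin l × Fin k) :=
    Set.range Sum.inl ∪ Sum.inr '' (A ×ˢ Set.univ) with hTdef
  have hIT : I ⊆ T := by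
    intro v hv
    obtain ⟨i, p, rfl⟩ := hinr v hv
    exact Or.inr ⟨(i, p), ⟨⟨Sum.inr (i,p), hv, rfl⟩, trivial⟩, rfl⟩
  have hTS : T \ I ⊆ S := by
    rintro v ⟨hvT, hvI⟩
    rcases hvT with ⟨a, rfl⟩ | ⟨⟨j, q⟩, ⟨hjA, -⟩, rfl⟩
    · exact hleft a
    · obtain ⟨w, hwI, hgw⟩ := hjA
      obtain ⟨j', p, rfl⟩ := hinr w hwI
      simp only [hgdef, Sum.elim_inr] at hgw
      subst hgw
      by_cases hq : q = p
      · subst hq; exact absurd hwI hvI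
      · exact hwI.2 _ ((Gl_adj _ _ _ _).2 ⟨by simp [Ne.symm hq], Or.inr (Or.inr ⟨j', p, q, rfl, rfl⟩)⟩)
  have hdisj : Disjoint (Set.range (Sum.inl : Fin (l-1) → Fin (l-1) ⊕ Fin l × Fin k))
      (Sum.inr '' (A ×ˢ Set.univ)) := by
    rw [Set.disjoint_left]
    rintro _ ⟨a, rfl⟩ ⟨x, -, h⟩
    exact Sum.inl_ne_inr h.symm
  have hTcard : T.ncard = (l - 1) + I.ncard * k := by
    rw [hTdef, Set.ncard_union_eq hdisj (Set.toFinite _) (Set.toFinite _),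
      ← Set.image_univ, Set.ncard_image_of_injective _ Sum.inl_injective, Set.ncard_univ,
      Set.ncard_image_of_injective _ Sum.inr_injective, ncard_set_prod, hA, Set.ncard_univ]
    simp
  have hdiff : (T \ I).ncard = (l - 1) + I.ncard * k - I.ncard :=
    by rw [Set.ncard_diff hIT (Set.toFinite _), hTcard]
  have hle : (T \ I).ncard ≤ S.ncard := Set.ncard_le_ncard hTS (Set.toFinite _)
  have hfin : isoCount (Gl k l) S = I.ncard := rfl
  rw [hfin]
  constructor
  · exact hnl
  · have hmul : I.ncard * (k - 1) + I.ncard = I.ncard * k := by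
      have hkk : k - 1 + 1 = k := by omega
      calc I.ncard * (k-1) + I.ncard = I.ncard * ((k-1)+1) := by ring
        _ = I.ncard * k := by rw [hkk]
    omega

lemma Gl_upper (k l : ℕ) (hk : 2 ≤ k) (hl : 2 ≤ l) :
    ∃ S : Set (Fin (l-1) ⊕ Fin l × Fin k),
      isoCount (Gl k l) S = l ∧ S.ncard = (l - 1) + l * (k - 1) := by
  classical
  set z : Fin k := ⟨0, by omega⟩ with hz
  set S : Set (Fin (l-1) ⊕ Fin l × Fin k) :=
    Set.range Sum.inl ∪ Sum.inr '' (Set.univ ×ˢ ({z}ᶜ : Set (Fin k))) with hS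
  have hiso : {v | v ∉ S ∧ ∀ w, (Gl k l).Adj v w → w ∈ S}
      = Sum.inr '' (Set.univ ×ˢ ({z} : Set (Fin k))) := by
    ext v
    constructor
    · rintro ⟨hvS, -⟩
      match v with
      | Sum.inl a => exact absurd (Or.inl ⟨a, rfl⟩) hvS
      | Sum.inr (i, q) =>
        refine ⟨(i, q), ⟨trivial, ?_⟩, rfl⟩
        by_contra hq
        exact hvS (Or.inr ⟨(i, q), ⟨trivial, hq⟩, rfl⟩)
    · rintro ⟨⟨i, q⟩, ⟨-, hq⟩, rfl⟩
      simp only [Set.mem_singleton_iff] at hq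
      subst hq
      constructor
      · rintro (⟨a, ha⟩ | ⟨⟨j, p⟩, ⟨-, hp⟩, he⟩)
        · exact Sum.inl_ne_inr ha
        · rw [Sum.inr.injEq, Prod.mk.injEq] at he
          exact hp (Set.mem_singleton_iff.2 he.2)
      · intro w hw
        obtain ⟨hne, (hL | hL | ⟨i', p, q', he, rfl⟩)⟩ := (Gl_adj _ _ _ _).1 hw
        · simp at hL
        · match w with
          | Sum.inl a => exact Or.inl ⟨a, rfl⟩
          | Sum.inr _ => simp at hL
        · rw [Sum.inr.injEq, Prod.mk.injEq] at he
          obtain ⟨rfl, rfl⟩ := he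
          refine Or.inr ⟨(i, q'), ⟨trivial, ?_⟩, rfl⟩
          simp only [Set.mem_compl_iff, Set.mem_singleton_iff]
          rintro rfl
          exact hne rfl
  have hdisj : Disjoint (Set.range (Sum.inl : Fin (l-1) → Fin (l-1) ⊕ Fin l × Fin k))
      (Sum.inr '' (Set.univ ×ˢ ({z}ᶜ : Set (Fin k)))) := by
    rw [Set.disjoint_left]
    rintro _ ⟨a, rfl⟩ ⟨x, -, h⟩
    exact Sum.inl_ne_inr h.symm
  refine ⟨S, ?_, ?_⟩
  · show Set.ncard _ = l
    rw [hiso, Set.ncard_image_of_injective _ Sum.inr_injective, ncard_set_prod,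
      Set.ncard_univ, Set.ncard_singleton]
    simp
  · rw [hS, Set.ncard_union_eq hdisj (Set.toFinite _) (Set.toFinite _),
      ← Set.image_univ, Set.ncard_image_of_injective _ Sum.inl_injective, Set.ncard_univ,
      Set.ncard_image_of_injective _ Sum.inr_injective, ncard_set_prod, Set.ncard_univ]
    have : ({z}ᶜ : Set (Fin k)).ncard = k - 1 := by
      rw [show ({z}ᶜ : Set (Fin k)) = Set.univ \ {z} from Set.compl_eq_univ_diff _,
        Set.ncard_diff (Set.subset_univ _) (Set.toFinite _), Set.ncard_univ, Set.ncard_singleton]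
      simp
    rw [this]
    simp

theorem Gl_isoToughVar (k l : ℕ) (hk : 2 ≤ k) (hl : 2 ≤ l) :
    isoToughVar (Gl k l) = (k : ℝ) + ((k : ℝ) - 1) / ((l : ℝ) - 1) := by
  rw [isoToughVar]
  have hlR : (0:ℝ) < (l:ℝ) - 1 := by
    have : (2:ℝ) ≤ l := by exact_mod_cast hl
    linarith
  set Q : Set ℝ := {x : ℝ | ∃ S : Set (Fin (l-1) ⊕ Fin l × Fin k),
    2 ≤ isoCount (Gl k l) S ∧ x = (S.ncard : ℝ) / ((isoCount (Gl k l) S : ℝ) - 1)} with hQ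
  have hlb : ∀ x ∈ Q, (k : ℝ) + ((k : ℝ) - 1) / ((l : ℝ) - 1) ≤ x := by
    rintro x ⟨S, hS2, rfl⟩
    obtain ⟨hnl, hcard⟩ := Gl_lower k l hk hl S hS2
    set n := isoCount (Gl k l) S with hn
    have hnR : (0:ℝ) < (n:ℝ) - 1 := by
      have : (2:ℝ) ≤ n := by exact_mod_cast hS2
      linarith
    have hcardR : ((l:ℝ) - 1) + (n:ℝ) * ((k:ℝ) - 1) ≤ (S.ncard : ℝ) := by
      have := hcard
      have h1 : ((l - 1 + n * (k - 1) : ℕ) : ℝ) ≤ (S.ncard : ℝ) := by exact_mod_cast this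
      calc ((l:ℝ) - 1) + (n:ℝ) * ((k:ℝ) - 1)
          = ((l - 1 + n * (k - 1) : ℕ) : ℝ) := by
            push_cast [Nat.cast_sub (by omega : 1 ≤ l), Nat.cast_sub (by omega : 1 ≤ k)]
            ring
        _ ≤ _ := h1
    have hnlR : (n:ℝ) ≤ (l:ℝ) := by exact_mod_cast hnl
    have hkR : (2:ℝ) ≤ (k:ℝ) := by exact_mod_cast hk
    rw [show (k : ℝ) + ((k : ℝ) - 1) / ((l : ℝ) - 1)
        = ((k:ℝ) * ((l:ℝ) - 1) + ((k:ℝ) - 1)) / ((l:ℝ) - 1) by field_simp,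
      div_le_div_iff₀ hlR hnR]
    nlinarith [mul_nonneg (sub_nonneg.2 hnlR) (by linarith : (0:ℝ) ≤ (l:ℝ) + (k:ℝ) - 2),
      mul_le_mul_of_nonneg_right hcardR (le_of_lt hlR)]
  obtain ⟨S0, hiso0, hcard0⟩ := Gl_upper k l hk hl
  have hmem : ((S0.ncard : ℝ) / ((isoCount (Gl k l) S0 : ℝ) - 1)) ∈ Q :=
    ⟨S0, by omega, rfl⟩
  have hval : (S0.ncard : ℝ) / ((isoCount (Gl k l) S0 : ℝ) - 1)
      = (k : ℝ) + ((k : ℝ) - 1) / ((l : ℝ) - 1) := by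
    rw [hiso0, hcard0]
    rw [show ((l - 1 + l * (k - 1) : ℕ) : ℝ) = ((l:ℝ) - 1) + (l:ℝ) * ((k:ℝ) - 1) by
      push_cast [Nat.cast_sub (by omega : 1 ≤ l), Nat.cast_sub (by omega : 1 ≤ k)]; ring]
    field_simp
    ring
  refine le_antisymm ?_ (le_csInf ⟨_, hmem⟩ hlb)
  calc sInf Q ≤ (S0.ncard : ℝ) / ((isoCount (Gl k l) S0 : ℝ) - 1) :=
        csInf_le ⟨_, hlb⟩ hmem
    _ = _ := hval
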